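/- Let G = (V, E) be a finite simple 2-edge-connected graph with |V| ≥ 3 and positive edge costs c, and let (G', c') be its inflated instance. Then the optimal value of the cut LP for (G, c) equals the optimal value of the partition LP for (G', c'), i.e., min{Σ_{e∈E} c_e x_e : x ∈ P_EC(G)} = min{Σ_{e'∈E'} c'_{e'} x'_{e'} : x' ∈ P_NC(G')}; moreover, the minimum cost of an integral point of P_EC(G) equals the minimum cost of an integral point of P_NC(G'). Consequently, the integrality ratio of the cut LP for (G, c) equals the integrality ratio of the partition LP for (G', c'). -/

import Mathlib

open scoped Classical
open Finset

namespace TwoNCTAP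

variable {V : Type*}

/-- The graph `H` with the vertex `u` "deleted": all edges incident to `u` are removed,
so that `u` becomes an isolated vertex. -/
def delVert (H : SimpleGraph V) (u : V) : SimpleGraph V where
  Adj a b := H.Adj a b ∧ a ≠ u ∧ b ≠ u
  symm := ⟨by rintro a b ⟨h, ha, hb⟩; exact ⟨h.symm, hb, ha⟩⟩
  loopless := ⟨by rintro a ⟨h, -, -⟩; exact H.irrefl h⟩

/-- The partition of `V ∖ {u}` into the vertex sets of the connected components
of `H − u`. -/
def compPartition (H : SimpleGraph V) (u : V) : Set (Set V) :=
  {S | ∃ v, v ≠ u ∧ S = {w | (delVert H u).Reachable v w}}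

/-- `P` is a partition of the set `S`. -/
def IsPartitionOf (P : Set (Set V)) (S : Set V) : Prop :=
  (∀ B ∈ P, B.Nonempty) ∧ (∀ B ∈ P, B ⊆ S) ∧ ∀ v ∈ S, ∃! B : Set V, B ∈ P ∧ v ∈ B

/-- An edge `e` crosses the partition `P` if its two endpoints lie in different blocks
of `P`. -/
def Crosses (P : Set (Set V)) (e : Sym2 V) : Prop :=
  ∃ v w, e = s(v, w) ∧ ∃ B ∈ P, ∃ C ∈ P, B ≠ C ∧ v ∈ B ∧ w ∈ C

/-- The edge `e` lies in the cut `δ(S)`: it has exactly one endpoint in `S`. -/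
def inCut (S : Set V) (e : Sym2 V) : Prop :=
  ∃ a b, e = s(a, b) ∧ a ∈ S ∧ b ∉ S

/-- `G` is 2-edge-connected: it is connected and remains connected after deleting any
single edge. -/
def TwoEdgeConnected (G : SimpleGraph V) : Prop :=
  G.Connected ∧ ∀ e ∈ G.edgeSet, (G.deleteEdges {e}).Connected

/-- The vertex set of the inflated instance: pairs `(v, e)` with `e ∈ E(G)` and
`v` an endpoint of `e`. -/
abbrev InflVert (G : SimpleGraph V) : Type _ :=
  {p : V × Sym2 V // p.2 ∈ G.edgeSet ∧ p.1 ∈ p.2}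

/-- The inflated graph `G'`: `(v, e)` and `(w, f)` are adjacent iff they are distinct and
either `v = w` (a clique edge) or `e = f` (the inter-clique edge of `e`). -/
def Infl (G : SimpleGraph V) : SimpleGraph (InflVert G) where
  Adj a b := a ≠ b ∧ (a.val.1 = b.val.1 ∨ a.val.2 = b.val.2)
  symm := ⟨by
    rintro a b ⟨h1, h2 | h2⟩
    · exact ⟨h1.symm, Or.inl h2.symm⟩
    · exact ⟨h1.symm, Or.inr h2.symm⟩⟩
  loopless := ⟨by rintro a ⟨h, -⟩; exact h rfl⟩

/-- The graph `(V', F')` consisting of the clique edges only. -/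
def cliqueGraph (G : SimpleGraph V) : SimpleGraph (InflVert G) where
  Adj a b := a ≠ b ∧ a.val.1 = b.val.1
  symm := ⟨by rintro a b ⟨h1, h2⟩; exact ⟨h1.symm, h2.symm⟩⟩
  loopless := ⟨by rintro a ⟨h, -⟩; exact h rfl⟩

variable [Fintype V]

/-- The objective value `Σ_{e ∈ E(H)} c_e x_e` of `x` for costs `c` on the edges of `H`. -/
noncomputable def obj {W : Type*} [Fintype W] (H : SimpleGraph W) (c x : Sym2 W → ℝ) : ℝ :=
  ∑ e ∈ Finset.univ.filter (fun e : Sym2 W => e ∈ H.edgeSet), c e * x e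

/-- The feasible region `P_EC(G)` of the cut LP relaxation of min-cost 2ECSS. -/
def PEC (G : SimpleGraph V) : Set (Sym2 V → ℝ) :=
  {x | (∀ e ∈ G.edgeSet, 0 ≤ x e ∧ x e ≤ 1) ∧
    ∀ S : Set V, S.Nonempty → S ≠ Set.univ →
      (2 : ℝ) ≤ ∑ e ∈ Finset.univ.filter
          (fun e : Sym2 V => e ∈ G.edgeSet ∧ inCut S e), x e}

/-- The feasible region `P_NC(G')` of the partition LP relaxation of min-cost 2NCSS for
the inflated instance: `0 ≤ x ≤ 1`, the cut constraints, and for every `w ∈ V'` and every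
partition `P` of `V' ∖ {w}` whose blocks are unions of vertex sets of connected
components of `(V', F') − w`, the partition constraint. -/
def PNC (G : SimpleGraph V) : Set (Sym2 (InflVert G) → ℝ) :=
  {x | (∀ f ∈ (Infl G).edgeSet, 0 ≤ x f ∧ x f ≤ 1) ∧
    (∀ S : Set (InflVert G), S.Nonempty → S ≠ Set.univ →
      (2 : ℝ) ≤ ∑ f ∈ Finset.univ.filter
          (fun f : Sym2 (InflVert G) => f ∈ (Infl G).edgeSet ∧ inCut S f), x f) ∧
    ∀ (w : InflVert G) (P : Set (Set (InflVert G))),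
      IsPartitionOf P {v | v ≠ w} →
      (∀ B ∈ compPartition (cliqueGraph G) w, ∃ C ∈ P, B ⊆ C) →
      (P.ncard : ℝ) - 1 ≤ ∑ f ∈ Finset.univ.filter
          (fun f : Sym2 (InflVert G) => f ∈ (Infl G).edgeSet ∧ Crosses P f), x f}

section Aux
variable {V : Type*} (G : SimpleGraph V)

lemma vertEq {G : SimpleGraph V} {a b : InflVert G}
    (h1 : a.val.1 = b.val.1) (h2 : a.val.2 = b.val.2) : a = b := by
  apply Subtype.ext; exact Prod.ext h1 h2

lemma sym2_out_eq (e : Sym2 V) : e = s(e.out.1, e.out.2) := by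
  conv_lhs => rw [← Quot.out_eq e]

/-- the inter-clique edge of `e`. -/
noncomputable def ie (e : Sym2 V) (he : e ∈ G.edgeSet) : Sym2 (InflVert G) :=
  s((⟨(e.out.1, e), he, Sym2.out_fst_mem e⟩ : InflVert G),
    (⟨(e.out.2, e), he, Sym2.out_snd_mem e⟩ : InflVert G))

lemma ie_mem {e : Sym2 V} (he : e ∈ G.edgeSet) : ie G e he ∈ (Infl G).edgeSet := by
  rw [ie, SimpleGraph.mem_edgeSet]
  have hadj : G.Adj e.out.1 e.out.2 := by
    rw [← SimpleGraph.mem_edgeSet, ← sym2_out_eq]; exact he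
  refine ⟨?_, Or.inr rfl⟩
  intro h
  exact hadj.ne (congrArg (fun a : InflVert G => a.val.1) h)

lemma mem_ie {e : Sym2 V} (he : e ∈ G.edgeSet) {a : InflVert G}
    (ha : a ∈ ie G e he) : a.val.2 = e := by
  rw [ie, Sym2.mem_iff] at ha
  rcases ha with h | h <;> rw [h]

lemma eq_ie {G : SimpleGraph V} {a b : InflVert G} (hab : a ≠ b)
    (h2 : a.val.2 = b.val.2) : s(a, b) = ie G a.val.2 a.2.1 := by
  set e := a.val.2 with hedef
  have he : e ∈ G.edgeSet := a.2.1
  have hadj : G.Adj e.out.1 e.out.2 := by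
    rw [← SimpleGraph.mem_edgeSet, ← sym2_out_eq]; exact he
  have hma : a.val.1 ∈ e := a.2.2
  have hmb : b.val.1 ∈ e := h2 ▸ b.2.2
  have hne : a.val.1 ≠ b.val.1 := fun h => hab (vertEq h h2)
  rw [sym2_out_eq e, Sym2.mem_iff] at hma hmb
  rw [ie]
  rcases hma with h1 | h1 <;> rcases hmb with h2' | h2'
  · exact absurd (h1.trans h2'.symm) hne
  · rw [Sym2.eq_iff]; left
    exact ⟨vertEq h1 rfl, vertEq h2' h2.symm⟩
  · rw [Sym2.eq_iff]; right
    exact ⟨vertEq h1 rfl, vertEq h2' h2.symm⟩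
  · exact absurd (h1.trans h2'.symm) hne

lemma inCut_mk {α : Type*} {S : Set α} {a b : α} :
    inCut S s(a, b) ↔ (a ∈ S ∧ b ∉ S) ∨ (b ∈ S ∧ a ∉ S) := by
  constructor
  · rintro ⟨x, y, hxy, hx, hy⟩
    rw [Sym2.eq_iff] at hxy
    rcases hxy with ⟨rfl, rfl⟩ | ⟨rfl, rfl⟩
    · exact Or.inl ⟨hx, hy⟩
    · exact Or.inr ⟨hx, hy⟩
  · rintro (⟨h1, h2⟩ | ⟨h1, h2⟩)
    · exact ⟨a, b, rfl, h1, h2⟩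
    · exact ⟨b, a, Sym2.eq_swap.symm, h1, h2⟩

lemma crosses_mk {α : Type*} {P : Set (Set α)} {a b : α} :
    Crosses P s(a, b) ↔ ∃ B ∈ P, ∃ C ∈ P, B ≠ C ∧ ((a ∈ B ∧ b ∈ C) ∨ (b ∈ B ∧ a ∈ C)) := by
  constructor
  · rintro ⟨x, y, hxy, B, hB, C, hC, hBC, hx, hy⟩
    rw [Sym2.eq_iff] at hxy
    rcases hxy with ⟨rfl, rfl⟩ | ⟨rfl, rfl⟩
    · exact ⟨B, hB, C, hC, hBC, Or.inl ⟨hx, hy⟩⟩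
    · exact ⟨B, hB, C, hC, hBC, Or.inr ⟨hx, hy⟩⟩
  · rintro ⟨B, hB, C, hC, hBC, ⟨h1, h2⟩ | ⟨h1, h2⟩⟩
    · exact ⟨a, b, rfl, B, hB, C, hC, hBC, h1, h2⟩
    · exact ⟨b, a, Sym2.eq_swap.symm, B, hB, C, hC, hBC, h1, h2⟩

end Aux
section Aux2
variable {V : Type*} (G : SimpleGraph V)

/-- is a clique edge (both endpoints same original vertex) -/
def isCl (f : Sym2 (InflVert G)) : Prop :=
  ∃ a b : InflVert G, f = s(a, b) ∧ a ≠ b ∧ a.val.1 = b.val.1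

lemma infl_edge_classify {f : Sym2 (InflVert G)} (hf : f ∈ (Infl G).edgeSet) :
    ∃ a b : InflVert G, f = s(a, b) ∧ a ≠ b ∧
      ((a.val.1 = b.val.1 ∧ a.val.2 ≠ b.val.2) ∨ (a.val.2 = b.val.2 ∧ a.val.1 ≠ b.val.1)) := by
  induction f using Sym2.ind with
  | _ a b =>
    rw [SimpleGraph.mem_edgeSet] at hf
    obtain ⟨hne, h⟩ := hf
    refine ⟨a, b, rfl, hne, ?_⟩
    rcases h with h | h
    · exact Or.inl ⟨h, fun h2 => hne (vertEq h h2)⟩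
    · exact Or.inr ⟨h, fun h2 => hne (vertEq h2 h)⟩

lemma not_isCl_inter {a b : InflVert G} (hne : a ≠ b) (h2 : a.val.2 = b.val.2) :
    ¬ isCl G s(a, b) := by
  rintro ⟨x, y, hxy, hxyne, h1⟩
  rw [Sym2.eq_iff] at hxy
  rcases hxy with ⟨rfl, rfl⟩ | ⟨rfl, rfl⟩
  · exact hxyne (vertEq h1 h2)
  · exact hxyne (vertEq h1 h2.symm)

variable [Nonempty (InflVert G)]

/-- total version of `ie`. -/
noncomputable def ieT (e : Sym2 V) : Sym2 (InflVert G) :=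
  if he : e ∈ G.edgeSet then ie G e he else
    s(Classical.arbitrary (InflVert G), Classical.arbitrary (InflVert G))

lemma ieT_eq {e : Sym2 V} (he : e ∈ G.edgeSet) : ieT G e = ie G e he := dif_pos he

lemma ieT_mem {e : Sym2 V} (he : e ∈ G.edgeSet) : ieT G e ∈ (Infl G).edgeSet := by
  rw [ieT_eq G he]; exact ie_mem G he

lemma eq_ieT {a b : InflVert G} (hab : a ≠ b) (h2 : a.val.2 = b.val.2) :
    s(a, b) = ieT G a.val.2 := by
  rw [ieT_eq G a.2.1]; exact eq_ie hab h2

lemma mem_ieT {e : Sym2 V} (he : e ∈ G.edgeSet) {a : InflVert G}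
    (ha : a ∈ ieT G e) : a.val.2 = e := by
  rw [ieT_eq G he] at ha; exact mem_ie G he ha

end Aux2

section Aux3
variable {V : Type*} (G : SimpleGraph V) [Fintype V]

/-- lift of a fractional point from G to the inflated instance -/
noncomputable def liftx (x : Sym2 V → ℝ) : Sym2 (InflVert G) → ℝ :=
  Sym2.lift ⟨fun a b => if a.val.2 = b.val.2 ∧ a ≠ b then x a.val.2 else 1, by
    intro a b
    dsimp only
    by_cases h : a.val.2 = b.val.2 ∧ a ≠ b
    · rw [if_pos h, if_pos ⟨h.1.symm, h.2.symm⟩, h.1]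
    · rw [if_neg h, if_neg (fun h2 => h ⟨h2.1.symm, h2.2.symm⟩)]⟩

lemma liftx_inter (x : Sym2 V → ℝ) {a b : InflVert G} (hne : a ≠ b)
    (h2 : a.val.2 = b.val.2) : liftx G x s(a, b) = x a.val.2 := by
  rw [liftx, Sym2.lift_mk]
  exact if_pos ⟨h2, hne⟩

lemma liftx_cl (x : Sym2 V → ℝ) {a b : InflVert G} (hne : a ≠ b)
    (h1 : a.val.1 = b.val.1) : liftx G x s(a, b) = 1 := by
  rw [liftx, Sym2.lift_mk]
  exact if_neg (fun h => hne (vertEq h1 h.1))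

variable [Nonempty (InflVert G)]

lemma liftx_ieT (x : Sym2 V → ℝ) {e : Sym2 V} (he : e ∈ G.edgeSet) :
    liftx G x (ieT G e) = x e := by
  rw [ieT_eq G he, ie, liftx_inter]
  · intro h
    have hadj : G.Adj e.out.1 e.out.2 := by
      rw [← SimpleGraph.mem_edgeSet, ← sym2_out_eq]; exact he
    exact hadj.ne (congrArg (fun a : InflVert G => a.val.1) h)
  · rfl

/-- pull back of a fractional point from the inflated instance to G -/
noncomputable def pullx (x' : Sym2 (InflVert G) → ℝ) : Sym2 V → ℝ :=
  fun e => if he : e ∈ G.edgeSet then x' (ie G e he) else 0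

lemma pullx_eq (x' : Sym2 (InflVert G) → ℝ) {e : Sym2 V} (he : e ∈ G.edgeSet) :
    pullx G x' e = x' (ieT G e) := by
  rw [pullx, dif_pos he, ieT_eq G he]

end Aux3
section Aux4
variable {V : Type*} (G : SimpleGraph V)

lemma out_adj {e : Sym2 V} (he : e ∈ G.edgeSet) : G.Adj e.out.1 e.out.2 := by
  rw [← SimpleGraph.mem_edgeSet, ← sym2_out_eq]; exact he

variable [Nonempty (InflVert G)]

lemma ieT_out {f : Sym2 (InflVert G)} (hf : f ∈ (Infl G).edgeSet)
    (hcl : ¬ isCl G f) : ieT G ((Quot.out f).1.val.2) = f := by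
  obtain ⟨a, b, rfl, hne, hcase⟩ := infl_edge_classify G hf
  rcases hcase with ⟨h1, h2⟩ | ⟨h2, h1⟩
  · exact absurd ⟨a, b, rfl, hne, h1⟩ hcl
  · have hm : (Quot.out s(a, b)).1 ∈ s(a, b) := Sym2.out_fst_mem _
    rw [Sym2.mem_iff] at hm
    have : (Quot.out s(a, b)).1.val.2 = a.val.2 := by
      rcases hm with h | h <;> rw [h]; exact h2.symm
    rw [this, ← eq_ieT G hne h2]

variable [Fintype V]

lemma sum_split (z : Sym2 (InflVert G) → ℝ) (p : Sym2 (InflVert G) → Prop) :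
    ∑ f ∈ Finset.univ.filter (fun f => f ∈ (Infl G).edgeSet ∧ p f), z f
    = (∑ f ∈ Finset.univ.filter (fun f => f ∈ (Infl G).edgeSet ∧ isCl G f ∧ p f), z f)
    + ∑ e ∈ Finset.univ.filter (fun e => e ∈ G.edgeSet ∧ p (ieT G e)), z (ieT G e) := by
  rw [← Finset.sum_filter_add_sum_filter_not
    (Finset.univ.filter (fun f => f ∈ (Infl G).edgeSet ∧ p f)) (isCl G) z]
  congr 1
  · congr 1
    rw [Finset.filter_filter]
    apply Finset.filter_congr
    intro f _
    constructor
    · rintro ⟨⟨h1, h2⟩, h3⟩; exact ⟨h1, h3, h2⟩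
    · rintro ⟨h1, h2, h3⟩; exact ⟨⟨h1, h3⟩, h2⟩
  · apply Finset.sum_nbij' (i := fun f => (Quot.out f).1.val.2) (j := ieT G)
    · intro f hf
      simp only [Finset.mem_filter] at hf ⊢
      obtain ⟨⟨-, hf1, hf2⟩, hf3⟩ := hf
      refine ⟨Finset.mem_univ _, (Quot.out f).1.2.1, ?_⟩
      rw [ieT_out G hf1 hf3]; exact hf2
    · intro e he
      simp only [Finset.mem_filter] at he ⊢
      obtain ⟨-, he1, he2⟩ := he
      refine ⟨⟨Finset.mem_univ _, ieT_mem G he1, he2⟩, ?_⟩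
      rw [ieT_eq G he1, ie]
      apply not_isCl_inter
      · intro h
        exact (out_adj G he1).ne (congrArg (fun a : InflVert G => a.val.1) h)
      · rfl
    · intro f hf
      simp only [Finset.mem_filter] at hf
      exact ieT_out G hf.1.2.1 hf.2
    · intro e he
      simp only [Finset.mem_filter] at he
      exact mem_ieT G he.2.1 (Sym2.out_fst_mem (ieT G e))
    · intro f hf
      simp only [Finset.mem_filter] at hf
      rw [ieT_out G hf.1.2.1 hf.2]
end Aux4
section Aux5
variable {V : Type*} {G : SimpleGraph V}

lemma exists_adj {H : SimpleGraph V} (hc : H.Connected) {v u : V} (hvu : v ≠ u) :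
    ∃ w, H.Adj v w := by
  obtain ⟨p⟩ := hc.preconnected v u
  cases p with
  | nil => exact absurd rfl hvu
  | cons h _ => exact ⟨_, h⟩

variable [Fintype V]

lemma deg1 (hc : G.Connected) (h2 : 2 ≤ Fintype.card V) (v : V) :
    ∃ e ∈ G.edgeSet, v ∈ e := by
  obtain ⟨u, hu⟩ := Fintype.exists_ne_of_one_lt_card (by omega) v
  obtain ⟨w, hw⟩ := exists_adj hc (Ne.symm hu)
  exact ⟨s(v, w), hw, Sym2.mem_mk_left v w⟩

lemma deg2 (h2ec : TwoEdgeConnected G) (hV : 3 ≤ Fintype.card V) (v : V) :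
    ∃ e f, e ∈ G.edgeSet ∧ f ∈ G.edgeSet ∧ v ∈ e ∧ v ∈ f ∧ e ≠ f := by
  obtain ⟨e, he, hve⟩ := deg1 h2ec.1 (by omega) v
  by_contra hcon
  push_neg at hcon
  have hall : ∀ f ∈ G.edgeSet, v ∈ f → f = e := by
    intro f hf hvf
    by_contra hne
    exact hne (hcon f e hf he hvf hve)
  have hc' := h2ec.2 e he
  obtain ⟨u, hu⟩ := Fintype.exists_ne_of_one_lt_card (by omega) v
  obtain ⟨w, hw⟩ := exists_adj hc' (Ne.symm hu)
  rw [SimpleGraph.deleteEdges_adj] at hw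
  exact hw.2 (by
    rw [Set.mem_singleton_iff]
    exact hall s(v, w) hw.1 (Sym2.mem_mk_left v w))

lemma infl_nonempty (hc : G.Connected) (h2 : 2 ≤ Fintype.card V) :
    Nonempty (InflVert G) := by
  have hne : Nonempty V := Fintype.card_pos_iff.mp (by omega)
  obtain ⟨v⟩ := hne
  obtain ⟨e, he, hve⟩ := deg1 hc h2 v
  exact ⟨⟨(v, e), he, hve⟩⟩

end Aux5

section Aux6
variable {V : Type*} (G : SimpleGraph V) [Fintype V] [Nonempty (InflVert G)]

lemma c'_ieT {c : Sym2 V → ℝ} {c' : Sym2 (InflVert G) → ℝ}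
    (hc'in : ∀ a b : InflVert G, a ≠ b → a.val.2 = b.val.2 → c' s(a, b) = c a.val.2)
    {e : Sym2 V} (he : e ∈ G.edgeSet) : c' (ieT G e) = c e := by
  rw [ieT_eq G he, ie]
  exact hc'in _ _ (fun h => (out_adj G he).ne
    (congrArg (fun a : InflVert G => a.val.1) h)) rfl

lemma obj_infl (c : Sym2 V → ℝ) (c' : Sym2 (InflVert G) → ℝ)
    (hc'cl : ∀ a b : InflVert G, a ≠ b → a.val.1 = b.val.1 → c' s(a, b) = 0)
    (hc'in : ∀ a b : InflVert G, a ≠ b → a.val.2 = b.val.2 → c' s(a, b) = c a.val.2)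
    (y : Sym2 (InflVert G) → ℝ) :
    obj (Infl G) c' y
      = ∑ e ∈ Finset.univ.filter (fun e => e ∈ G.edgeSet), c e * y (ieT G e) := by
  have h0 := sum_split G (fun f => c' f * y f) (fun _ => True)
  simp only [and_true] at h0
  rw [obj, h0]
  have hcl0 : ∑ f ∈ Finset.univ.filter
      (fun f => f ∈ (Infl G).edgeSet ∧ isCl G f), c' f * y f = 0 := by
    apply Finset.sum_eq_zero
    intro f hf
    simp only [Finset.mem_filter] at hf
    obtain ⟨-, -, a, b, rfl, hne, h1⟩ := hf
    rw [hc'cl a b hne h1, zero_mul]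
  rw [hcl0, zero_add]
  apply Finset.sum_congr rfl
  intro e he
  simp only [Finset.mem_filter] at he
  rw [c'_ieT G hc'in he.2]

lemma inCut_ieT (S : Set V) {e : Sym2 V} (he : e ∈ G.edgeSet) :
    inCut {a : InflVert G | a.val.1 ∈ S} (ieT G e) ↔ inCut S e := by
  rw [ieT_eq G he, ie, inCut_mk]
  conv_rhs => rw [sym2_out_eq e, inCut_mk]
  rfl

lemma pullx_mem_PEC (hdeg1 : ∀ v : V, ∃ e ∈ G.edgeSet, v ∈ e)
    {x' : Sym2 (InflVert G) → ℝ} (hx' : x' ∈ PNC G) : pullx G x' ∈ PEC G := by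
  obtain ⟨hb, hcut, -⟩ := hx'
  constructor
  · intro e he
    rw [pullx_eq G x' he]
    exact hb _ (ieT_mem G he)
  · intro S hS hSu
    set S' : Set (InflVert G) := {a : InflVert G | a.val.1 ∈ S} with hS'def
    have hS'ne : S'.Nonempty := by
      obtain ⟨v, hv⟩ := hS
      obtain ⟨e, he, hve⟩ := hdeg1 v
      exact ⟨⟨(v, e), he, hve⟩, hv⟩
    have hS'u : S' ≠ Set.univ := by
      intro h
      apply hSu
      rw [Set.eq_univ_iff_forall]
      intro v
      obtain ⟨e, he, hve⟩ := hdeg1 v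
      have : (⟨(v, e), he, hve⟩ : InflVert G) ∈ S' := h ▸ Set.mem_univ _
      exact this
    have h2 := hcut S' hS'ne hS'u
    rw [sum_split G x' (inCut S')] at h2
    have hcl0 : ∑ f ∈ Finset.univ.filter
        (fun f => f ∈ (Infl G).edgeSet ∧ isCl G f ∧ inCut S' f), x' f = 0 := by
      rw [Finset.filter_false_of_mem, Finset.sum_empty]
      rintro f - ⟨-, ⟨a, b, rfl, hne, h1⟩, hcut'⟩
      rw [inCut_mk] at hcut'
      have : a ∈ S' ↔ b ∈ S' := by
        simp only [hS'def, Set.mem_setOf_eq, h1]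
      rcases hcut' with ⟨h2', h3⟩ | ⟨h2', h3⟩
      · exact h3 (this.mp h2')
      · exact h3 (this.mpr h2')
    rw [hcl0, zero_add] at h2
    calc (2 : ℝ) ≤ _ := h2
    _ = _ := by
      apply Finset.sum_congr
      · apply Finset.filter_congr
        intro e _
        constructor
        · rintro ⟨he, hc⟩
          exact ⟨he, (inCut_ieT G S he).mp hc⟩
        · rintro ⟨he, hc⟩
          exact ⟨he, (inCut_ieT G S he).mpr hc⟩
      · intro e he
        simp only [Finset.mem_filter] at he
        rw [pullx_eq G x' he.2.1]

end Aux6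
section Aux7
variable {V : Type*} {G : SimpleGraph V} [Fintype V]

/-- edge crosses the classes of the labelling q -/
def qCross {ι : Type*} (q : V → ι) (e : Sym2 V) : Prop :=
  ∃ u w, e = s(u, w) ∧ q u ≠ q w

lemma crossing_lb {x : Sym2 V → ℝ} (hx : x ∈ PEC G) {ι : Type*} (q : V → ι)
    (hk : 2 ≤ (Finset.univ.image q).card) :
    ((Finset.univ.image q).card : ℝ) ≤
      ∑ e ∈ Finset.univ.filter (fun e => e ∈ G.edgeSet ∧ qCross q e), x e := by
  classical
  set B := Finset.univ.image q with hB
  set E := Finset.univ.filter (fun e : Sym2 V => e ∈ G.edgeSet) with hE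
  have hstep1 : ∀ c ∈ B, (2 : ℝ) ≤ ∑ e ∈ E, ite (inCut {v | q v = c} e) (x e) 0 := by
    intro c hc
    obtain ⟨v, -, hv⟩ := Finset.mem_image.mp hc
    have hne : ({v | q v = c} : Set V).Nonempty := ⟨v, hv⟩
    have hpr : ({v | q v = c} : Set V) ≠ Set.univ := by
      obtain ⟨c', hc', hcc'⟩ := Finset.exists_mem_ne (lt_of_lt_of_le one_lt_two hk) c
      obtain ⟨u, -, hu⟩ := Finset.mem_image.mp hc'
      intro h
      have : u ∈ {v | q v = c} := h ▸ Set.mem_univ u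
      exact hcc' (hu ▸ this)
    have := hx.2 _ hne hpr
    calc (2:ℝ) ≤ _ := this
    _ = _ := by
      rw [← Finset.sum_filter, ← Finset.filter_filter]
  have hstep2 : ∀ e ∈ E, ∑ c ∈ B, ite (inCut {v | q v = c} e) (x e) 0
      = ite (qCross q e) (2 * x e) 0 := by
    intro e he
    rw [Finset.mem_filter] at he
    have hu := Sym2.out_fst_mem e
    have hw := Sym2.out_snd_mem e
    set u := e.out.1
    set w := e.out.2
    have heq : e = s(u, w) := sym2_out_eq e
    have huw : u ≠ w := (out_adj G he.2).ne
    have hiff : ∀ c, inCut {v | q v = c} e ↔ (q u = c ∧ q w ≠ c) ∨ (q w = c ∧ q u ≠ c) := by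
      intro c
      rw [heq, inCut_mk]
      rfl
    by_cases hcr : qCross q e
    · have hquw : q u ≠ q w := by
        obtain ⟨u', w', heq', hne'⟩ := hcr
        rw [heq] at heq'
        rw [Sym2.eq_iff] at heq'
        rcases heq' with ⟨rfl, rfl⟩ | ⟨rfl, rfl⟩
        · exact hne'
        · exact hne'.symm
      rw [if_pos hcr]
      have hfil : B.filter (fun c => inCut {v | q v = c} e) = {q u, q w} := by
        apply Finset.ext
        intro c
        simp only [Finset.mem_filter, Finset.mem_insert, Finset.mem_singleton]
        constructor
        · rintro ⟨-, hcut⟩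
          rcases (hiff c).mp hcut with ⟨h1, -⟩ | ⟨h1, -⟩
          · exact Or.inl h1.symm
          · exact Or.inr h1.symm
        · rintro (rfl | rfl)
          · exact ⟨Finset.mem_image_of_mem q (Finset.mem_univ u),
              (hiff _).mpr (Or.inl ⟨rfl, Ne.symm hquw⟩)⟩
          · exact ⟨Finset.mem_image_of_mem q (Finset.mem_univ w),
              (hiff _).mpr (Or.inr ⟨rfl, hquw⟩)⟩
      rw [← Finset.sum_filter, hfil, Finset.sum_pair hquw, two_mul]
    · rw [if_neg hcr, ← Finset.sum_filter]
      have hfil : B.filter (fun c => inCut {v | q v = c} e) = ∅ := by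
        apply Finset.filter_false_of_mem
        intro c _ hcut
        rcases (hiff c).mp hcut with ⟨h1, h2⟩ | ⟨h1, h2⟩
        · exact hcr ⟨u, w, heq, by intro h; rw [h] at h1; exact h2 h1⟩
        · exact hcr ⟨u, w, heq, by intro h; rw [← h] at h1; exact h2 h1⟩
      rw [hfil, Finset.sum_empty]
  have hmain : 2 * (B.card : ℝ) ≤ 2 * ∑ e ∈ E.filter (qCross q), x e := by
    calc 2 * (B.card : ℝ) = ∑ _c ∈ B, (2 : ℝ) := by
          rw [Finset.sum_const, nsmul_eq_mul, mul_comm]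
    _ ≤ ∑ c ∈ B, ∑ e ∈ E, ite (inCut {v | q v = c} e) (x e) 0 :=
          Finset.sum_le_sum hstep1
    _ = ∑ e ∈ E, ∑ c ∈ B, ite (inCut {v | q v = c} e) (x e) 0 := Finset.sum_comm
    _ = ∑ e ∈ E, ite (qCross q e) (2 * x e) 0 := Finset.sum_congr rfl hstep2
    _ = ∑ e ∈ E.filter (qCross q), 2 * x e := (Finset.sum_filter _ _).symm
    _ = 2 * ∑ e ∈ E.filter (qCross q), x e := by rw [Finset.mul_sum]
  have hfin : (B.card : ℝ) ≤ ∑ e ∈ E.filter (qCross q), x e := by linarith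
  calc (B.card : ℝ) ≤ ∑ e ∈ E.filter (qCross q), x e := hfin
  _ = _ := by rw [hE, Finset.filter_filter]

end Aux7
section Aux8
variable {V : Type*} {G : SimpleGraph V} [Fintype V]

lemma cut_lb_aux {x : Sym2 V → ℝ} (hx : x ∈ PEC G) {T : Set V} (hTne : T.Nonempty)
    (hTpr : T ≠ Set.univ) {h₀ : Sym2 V} (hh₀ : h₀ ∈ G.edgeSet) {p : Sym2 V → Prop}
    (himp : ∀ g ∈ G.edgeSet, g ≠ h₀ → inCut T g → p g) :
    1 ≤ ∑ g ∈ Finset.univ.filter (fun g => g ∈ G.edgeSet ∧ p g), x g := by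
  classical
  set A := Finset.univ.filter (fun g => g ∈ G.edgeSet ∧ inCut T g) with hA
  have h2 : (2 : ℝ) ≤ ∑ g ∈ A, x g := hx.2 T hTne hTpr
  have hsub : A.erase h₀ ⊆ Finset.univ.filter (fun g => g ∈ G.edgeSet ∧ p g) := by
    intro g hg
    rw [Finset.mem_erase, hA, Finset.mem_filter] at hg
    obtain ⟨hne, -, hge, hgc⟩ := hg
    rw [Finset.mem_filter]
    exact ⟨Finset.mem_univ _, hge, himp g hge hne hgc⟩
  have hle : ∑ g ∈ A.erase h₀, x g
      ≤ ∑ g ∈ Finset.univ.filter (fun g => g ∈ G.edgeSet ∧ p g), x g := by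
    apply Finset.sum_le_sum_of_subset_of_nonneg hsub
    intro g hg _
    rw [Finset.mem_filter] at hg
    exact (hx.1 g hg.2.1).1
  have h1 : (1 : ℝ) ≤ ∑ g ∈ A.erase h₀, x g := by
    by_cases hmem : h₀ ∈ A
    · have := Finset.sum_erase_add A x hmem
      have hb := (hx.1 h₀ hh₀).2
      linarith
    · rw [Finset.erase_eq_of_notMem hmem]
      linarith
  linarith

end Aux8

section Aux9
variable {V : Type*} (G : SimpleGraph V) [Fintype V] [Nonempty (InflVert G)]

lemma liftx_nonneg {x : Sym2 V → ℝ} (hx0 : ∀ e ∈ G.edgeSet, 0 ≤ x e)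
    {f : Sym2 (InflVert G)} (hf : f ∈ (Infl G).edgeSet) : 0 ≤ liftx G x f := by
  obtain ⟨a, b, rfl, hne, hcase⟩ := infl_edge_classify G hf
  rcases hcase with ⟨h1, -⟩ | ⟨h2, -⟩
  · rw [liftx_cl G x hne h1]; norm_num
  · rw [liftx_inter G x hne h2]; exact hx0 _ a.2.1

lemma liftx_le_one {x : Sym2 V → ℝ} (hx1 : ∀ e ∈ G.edgeSet, x e ≤ 1)
    {f : Sym2 (InflVert G)} (hf : f ∈ (Infl G).edgeSet) : liftx G x f ≤ 1 := by
  obtain ⟨a, b, rfl, hne, hcase⟩ := infl_edge_classify G hf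
  rcases hcase with ⟨h1, -⟩ | ⟨h2, -⟩
  · rw [liftx_cl G x hne h1]
  · rw [liftx_inter G x hne h2]; exact hx1 _ a.2.1

/-- The sum of `liftx x` over the cut of `S'` decomposes; the inter-clique part is a
sum over edges of `G`. -/
lemma liftx_sum_split (x : Sym2 V → ℝ) (p : Sym2 (InflVert G) → Prop) :
    ∑ f ∈ Finset.univ.filter (fun f => f ∈ (Infl G).edgeSet ∧ p f), liftx G x f
    = (∑ f ∈ Finset.univ.filter
        (fun f => f ∈ (Infl G).edgeSet ∧ isCl G f ∧ p f), liftx G x f)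
    + ∑ e ∈ Finset.univ.filter (fun e => e ∈ G.edgeSet ∧ p (ieT G e)), x e := by
  rw [sum_split G (liftx G x) p]
  congr 1
  apply Finset.sum_congr rfl
  intro e he
  rw [Finset.mem_filter] at he
  rw [liftx_ieT G x he.2.1]


lemma ieT_rep {g : Sym2 V} (hg : g ∈ G.edgeSet) :
    ∃ P Q : InflVert G, P ≠ Q ∧ ieT G g = s(P, Q) ∧
      P.val.1 = g.out.1 ∧ Q.val.1 = g.out.2 ∧ P.val.2 = g ∧ Q.val.2 = g := by
  refine ⟨⟨(g.out.1, g), hg, Sym2.out_fst_mem g⟩,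
    ⟨(g.out.2, g), hg, Sym2.out_snd_mem g⟩, ?_, ieT_eq G hg, rfl, rfl, rfl, rfl⟩
  intro h
  exact (out_adj G hg).ne (congrArg (fun c : InflVert G => c.val.1) h)

lemma liftx_cut {x : Sym2 V → ℝ} (hx : x ∈ PEC G) (hV : 3 ≤ Fintype.card V)
    (hdeg2 : ∀ v : V, ∃ e f, e ∈ G.edgeSet ∧ f ∈ G.edgeSet ∧ v ∈ e ∧ v ∈ f ∧ e ≠ f)
    (S' : Set (InflVert G)) (hne : S'.Nonempty) (hpr : S' ≠ Set.univ) :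
    (2 : ℝ) ≤ ∑ f ∈ Finset.univ.filter
        (fun f => f ∈ (Infl G).edgeSet ∧ inCut S' f), liftx G x f := by
  classical
  have hnn : ∀ f ∈ Finset.univ.filter
      (fun f => f ∈ (Infl G).edgeSet ∧ inCut S' f), 0 ≤ liftx G x f := by
    intro f hf
    rw [Finset.mem_filter] at hf
    exact liftx_nonneg G (fun e he => (hx.1 e he).1) hf.2.1
  by_cases hsp : ∃ a b : InflVert G, a.val.1 = b.val.1 ∧ a ∈ S' ∧ b ∉ S'
  · -- some clique is split
    obtain ⟨a, b, hab1, haS, hbS⟩ := hsp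
    have habne : a ≠ b := fun h => hbS (h ▸ haS)
    have hf0mem : s(a, b) ∈ (Infl G).edgeSet := by
      rw [SimpleGraph.mem_edgeSet]; exact ⟨habne, Or.inl hab1⟩
    have hf0cut : inCut S' s(a, b) := inCut_mk.mpr (Or.inl ⟨haS, hbS⟩)
    have hf0val : liftx G x s(a, b) = 1 := liftx_cl G x habne hab1
    by_cases hsp2 : ∃ a' b' : InflVert G,
        a'.val.1 = b'.val.1 ∧ a' ∈ S' ∧ b' ∉ S' ∧ s(a', b') ≠ s(a, b)
    · -- two distinct crossing clique edges
      obtain ⟨a', b', hab1', haS', hbS', hne'⟩ := hsp2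
      have habne' : a' ≠ b' := fun h => hbS' (h ▸ haS')
      have hf1mem : s(a', b') ∈ (Infl G).edgeSet := by
        rw [SimpleGraph.mem_edgeSet]; exact ⟨habne', Or.inl hab1'⟩
      have hsub : ({s(a, b), s(a', b')} : Finset (Sym2 (InflVert G)))
          ⊆ Finset.univ.filter (fun f => f ∈ (Infl G).edgeSet ∧ inCut S' f) := by
        intro f hf
        rw [Finset.mem_insert, Finset.mem_singleton] at hf
        rw [Finset.mem_filter]
        rcases hf with rfl | rfl
        · exact ⟨Finset.mem_univ _, hf0mem, hf0cut⟩
        · exact ⟨Finset.mem_univ _, hf1mem, inCut_mk.mpr (Or.inl ⟨haS', hbS'⟩)⟩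
      calc (2 : ℝ) = ∑ f ∈ ({s(a, b), s(a', b')} : Finset (Sym2 (InflVert G))),
            liftx G x f := by
            rw [Finset.sum_pair (Ne.symm hne'), hf0val, liftx_cl G x habne' hab1']
            norm_num
      _ ≤ _ := Finset.sum_le_sum_of_subset_of_nonneg hsub (fun f hf _ => hnn f hf)
    · -- exactly one crossing clique edge `s(a,b)`; the split vertex has degree 2
      push_neg at hsp2
      set v := a.val.1 with hvdef
      have hb1 : b.val.1 = v := hab1.symm
      -- all copies of v are a or b
      have hcv : ∀ c : InflVert G, c.val.1 = v → c = a ∨ c = b := by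
        intro c hc
        by_cases hcS : c ∈ S'
        · have := hsp2 c b (hc.trans hb1.symm) hcS hbS
          rw [Sym2.eq_iff] at this
          rcases this with ⟨h1, -⟩ | ⟨h1, -⟩
          · exact Or.inl h1
          · exact Or.inr h1
        · have := hsp2 a c (hc.symm : v = c.val.1) haS hcS
          rw [Sym2.eq_iff] at this
          rcases this with ⟨-, h2⟩ | ⟨-, h2⟩
          · exact Or.inr h2
          · exact Or.inl h2
      set ea := a.val.2 with headef
      set eb := b.val.2 with hebdef
      have heaeb : ea ≠ eb := by
        intro h
        exact habne (vertEq hab1 h)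
      have hea : ea ∈ G.edgeSet := a.2.1
      have heb : eb ∈ G.edgeSet := b.2.1
      -- the only edges at v are ea and eb
      have hedges : ∀ g ∈ G.edgeSet, v ∈ g → g = ea ∨ g = eb := by
        intro g hg hvg
        rcases hcv ⟨(v, g), hg, hvg⟩ rfl with h | h
        · exact Or.inl (congrArg (fun c : InflVert G => c.val.2) h)
        · exact Or.inr (congrArg (fun c : InflVert G => c.val.2) h)
      -- no other clique is split
      have hns : ∀ c d : InflVert G, c.val.1 = d.val.1 → c.val.1 ≠ v → c ∈ S' → d ∈ S' := by
        intro c d hcd hcv' hcS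
        by_contra hdS
        have := hsp2 c d hcd hcS hdS
        rw [Sym2.eq_iff] at this
        rcases this with ⟨h1, -⟩ | ⟨h1, -⟩
        · exact hcv' (congrArg (fun c : InflVert G => c.val.1) h1)
        · exact hcv' ((congrArg (fun c : InflVert G => c.val.1) h1).trans hb1)
      set S₀ : Set V := {u | u ≠ v ∧ ∃ c : InflVert G, c.val.1 = u ∧ c ∈ S'} with hS₀def
      have key₀ : ∀ c : InflVert G, c.val.1 ≠ v → (c ∈ S' ↔ c.val.1 ∈ S₀) := by
        intro c hcv'
        constructor
        · intro hcS
          exact ⟨hcv', c, rfl, hcS⟩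
        · rintro ⟨-, d, hd1, hdS⟩
          exact hns d c hd1 (hd1 ▸ hcv') hdS
      -- lower bound 1 for the clique part
      have hclique : (1 : ℝ) ≤ ∑ f ∈ Finset.univ.filter
          (fun f => f ∈ (Infl G).edgeSet ∧ isCl G f ∧ inCut S' f), liftx G x f := by
        have hsub : ({s(a, b)} : Finset (Sym2 (InflVert G)))
            ⊆ Finset.univ.filter
              (fun f => f ∈ (Infl G).edgeSet ∧ isCl G f ∧ inCut S' f) := by
          intro f hf
          rw [Finset.mem_singleton] at hf
          subst hf
          rw [Finset.mem_filter]
          exact ⟨Finset.mem_univ _, hf0mem, ⟨a, b, rfl, habne, hab1⟩, hf0cut⟩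
        calc (1 : ℝ) = ∑ f ∈ ({s(a, b)} : Finset (Sym2 (InflVert G))), liftx G x f := by
              rw [Finset.sum_singleton, hf0val]
        _ ≤ _ := by
          apply Finset.sum_le_sum_of_subset_of_nonneg hsub
          intro f hf _
          rw [Finset.mem_filter] at hf
          exact liftx_nonneg G (fun e he => (hx.1 e he).1) hf.2.1
      -- lower bound 1 for the inter-clique part
      have hinter : (1 : ℝ) ≤ ∑ e ∈ Finset.univ.filter
          (fun e => e ∈ G.edgeSet ∧ inCut S' (ieT G e)), x e := by
        have hvS₀ : v ∉ S₀ := fun h => h.1 rfl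
        by_cases hTu : S₀ ∪ {v} = Set.univ
        · -- use T' := S₀, exceptional edge ea
          have hS₀all : ∀ u : V, u ≠ v → u ∈ S₀ := by
            intro u hu
            have : u ∈ S₀ ∪ {v} := hTu ▸ Set.mem_univ u
            rcases this with h | h
            · exact h
            · exact absurd h hu
          have hS₀ne : S₀.Nonempty := by
            obtain ⟨u, hu⟩ := Fintype.exists_ne_of_one_lt_card (by omega) v
            exact ⟨u, hS₀all u hu⟩
          have hS₀pr : S₀ ≠ Set.univ := by
            intro h
            exact hvS₀ (h ▸ Set.mem_univ v)
          apply cut_lb_aux hx hS₀ne hS₀pr hea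
          intro g hg hgea hcut
          obtain ⟨P, Q, hPQ, hgeq, hP1, hQ1, hP2, hQ2⟩ := ieT_rep G hg
          rw [hgeq, inCut_mk]
          rw [sym2_out_eq g, inCut_mk] at hcut
          rcases hcut with ⟨hp, hq⟩ | ⟨hq, hp⟩
          · have hq2 : g.out.2 = v := by
              by_contra h
              exact hq (hS₀all _ h)
            have hpv : g.out.1 ≠ v := fun h => hvS₀ (h ▸ hp)
            have hPmem : P ∈ S' := by
              rw [key₀ P (hP1 ▸ hpv), hP1]
              exact hp
            have hQb : Q = b := by
              rcases hcv Q (hQ1.trans hq2) with h | h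
              · exact absurd (by rw [← hQ2, h] : g = ea) hgea
              · exact h
            exact Or.inl ⟨hPmem, hQb ▸ hbS⟩
          · have hq2 : g.out.1 = v := by
              by_contra h
              exact hp (hS₀all _ h)
            have hpv : g.out.2 ≠ v := fun h => hvS₀ (h ▸ hq)
            have hQmem : Q ∈ S' := by
              rw [key₀ Q (hQ1 ▸ hpv), hQ1]
              exact hq
            have hPb : P = b := by
              rcases hcv P (hP1.trans hq2) with h | h
              · exact absurd (by rw [← hP2, h] : g = ea) hgea
              · exact h
            exact Or.inr ⟨hQmem, hPb ▸ hbS⟩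
        · -- use T := S₀ ∪ {v}, exceptional edge eb
          apply cut_lb_aux hx ⟨v, Or.inr rfl⟩ hTu heb
          intro g hg hgeb hcut
          obtain ⟨P, Q, hPQ, hgeq, hP1, hQ1, hP2, hQ2⟩ := ieT_rep G hg
          rw [hgeq, inCut_mk]
          rw [sym2_out_eq g, inCut_mk] at hcut
          have hmem1 : g.out.1 ∈ g := Sym2.out_fst_mem g
          have hmem2 : g.out.2 ∈ g := Sym2.out_snd_mem g
          rcases hcut with ⟨hp, hq⟩ | ⟨hq, hp⟩
          · have hq1 : g.out.2 ∉ S₀ := fun h => hq (Or.inl h)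
            have hq2 : g.out.2 ≠ v := fun h => hq (Or.inr h)
            have hQnot : Q ∉ S' := by
              rw [key₀ Q (hQ1 ▸ hq2), hQ1]
              exact hq1
            have hPmem : P ∈ S' := by
              rcases hp with h | h
              · rw [key₀ P (hP1 ▸ h.1), hP1]
                exact h
              · have hP1v : P.val.1 = v := hP1.trans h
                rcases hcv P hP1v with hh | hh
                · exact hh ▸ haS
                · exact absurd (by rw [← hP2, hh] : g = eb) hgeb
            exact Or.inl ⟨hPmem, hQnot⟩
          · have hq1 : g.out.1 ∉ S₀ := fun h => hp (Or.inl h)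
            have hq2 : g.out.1 ≠ v := fun h => hp (Or.inr h)
            have hPnot : P ∉ S' := by
              rw [key₀ P (hP1 ▸ hq2), hP1]
              exact hq1
            have hQmem : Q ∈ S' := by
              rcases hq with h | h
              · rw [key₀ Q (hQ1 ▸ h.1), hQ1]
                exact h
              · have hQ1v : Q.val.1 = v := hQ1.trans h
                rcases hcv Q hQ1v with hh | hh
                · exact hh ▸ haS
                · exact absurd (by rw [← hQ2, hh] : g = eb) hgeb
            exact Or.inr ⟨hQmem, hPnot⟩
      rw [liftx_sum_split G x (inCut S')]
      linarith
  · -- no clique split: reduce to a cut in G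
    push_neg at hsp
    set S : Set V := {u | ∃ a : InflVert G, a.val.1 = u ∧ a ∈ S'} with hSdef
    have key : ∀ a : InflVert G, a ∈ S' ↔ a.val.1 ∈ S := by
      intro a
      constructor
      · intro ha; exact ⟨a, rfl, ha⟩
      · rintro ⟨b, hb1, hbS⟩
        exact hsp b a hb1 hbS
    have hSne : S.Nonempty := by
      obtain ⟨a, ha⟩ := hne
      exact ⟨a.val.1, a, rfl, ha⟩
    have hSpr : S ≠ Set.univ := by
      obtain ⟨b, hb⟩ := (Set.ne_univ_iff_exists_notMem S').mp hpr
      intro h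
      exact hb ((key b).mpr (h ▸ Set.mem_univ b.val.1))
    have hG : (2 : ℝ) ≤ ∑ e ∈ Finset.univ.filter
        (fun e => e ∈ G.edgeSet ∧ inCut S e), x e := hx.2 S hSne hSpr
    rw [liftx_sum_split G x (inCut S')]
    have hclnn : (0:ℝ) ≤ ∑ f ∈ Finset.univ.filter
        (fun f => f ∈ (Infl G).edgeSet ∧ isCl G f ∧ inCut S' f), liftx G x f := by
      apply Finset.sum_nonneg
      intro f hf
      rw [Finset.mem_filter] at hf
      exact liftx_nonneg G (fun e he => (hx.1 e he).1) hf.2.1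
    have hfeq : Finset.univ.filter (fun e => e ∈ G.edgeSet ∧ inCut S e)
        = Finset.univ.filter (fun e => e ∈ G.edgeSet ∧ inCut S' (ieT G e)) := by
      apply Finset.filter_congr
      intro e _
      constructor
      · rintro ⟨he, hc⟩
        refine ⟨he, ?_⟩
        rw [ieT_eq G he, ie, inCut_mk]
        rw [sym2_out_eq e, inCut_mk] at hc
        rcases hc with ⟨h1, h2⟩ | ⟨h1, h2⟩
        · exact Or.inl ⟨(key _).mpr h1, fun h => h2 ((key _).mp h)⟩
        · exact Or.inr ⟨(key _).mpr h1, fun h => h2 ((key _).mp h)⟩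
      · rintro ⟨he, hc⟩
        refine ⟨he, ?_⟩
        rw [ieT_eq G he, ie, inCut_mk] at hc
        rw [sym2_out_eq e, inCut_mk]
        rcases hc with ⟨h1, h2⟩ | ⟨h1, h2⟩
        · exact Or.inl ⟨(key _).mp h1, fun h => h2 ((key _).mpr h)⟩
        · exact Or.inr ⟨(key _).mp h1, fun h => h2 ((key _).mpr h)⟩
    rw [← hfeq]
    linarith

end Aux9
section Aux10
variable {V : Type*} {G : SimpleGraph V}

lemma cliqueGraph_reach {w a b : InflVert G}
    (h : (delVert (cliqueGraph G) w).Reachable a b) :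
    a.val.1 = b.val.1 ∧ (a = b ∨ (a ≠ w ∧ b ≠ w)) := by
  obtain ⟨p⟩ := h
  induction p with
  | nil => exact ⟨rfl, Or.inl rfl⟩
  | cons h q ih =>
    obtain ⟨⟨hne, h1⟩, haw, hcw⟩ := h
    refine ⟨h1.trans ih.1, Or.inr ⟨haw, ?_⟩⟩
    rcases ih.2 with h | h
    · exact h ▸ hcw
    · exact h.2

lemma reachSet {w a : InflVert G} (haw : a ≠ w) :
    {b | (delVert (cliqueGraph G) w).Reachable a b}
      = {b : InflVert G | b.val.1 = a.val.1 ∧ b ≠ w} := by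
  ext b
  constructor
  · intro h
    obtain ⟨h1, h2⟩ := cliqueGraph_reach h
    refine ⟨h1.symm, ?_⟩
    rcases h2 with rfl | h2
    · exact haw
    · exact h2.2
  · rintro ⟨hb1, hbw⟩
    by_cases hab : a = b
    · exact hab ▸ SimpleGraph.Reachable.refl a
    · exact SimpleGraph.Adj.reachable ⟨⟨hab, hb1.symm⟩, haw, hbw⟩

lemma compPartition_mem {w a : InflVert G} (haw : a ≠ w) :
    {b : InflVert G | b.val.1 = a.val.1 ∧ b ≠ w} ∈ compPartition (cliqueGraph G) w :=
  ⟨a, haw, (reachSet haw).symm⟩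

end Aux10

section Aux11
variable {V : Type*} (G : SimpleGraph V) [Fintype V] [Nonempty (InflVert G)]

lemma liftx_partition {x : Sym2 V → ℝ} (hx : x ∈ PEC G)
    (hdeg2 : ∀ v : V, ∃ e f, e ∈ G.edgeSet ∧ f ∈ G.edgeSet ∧ v ∈ e ∧ v ∈ f ∧ e ≠ f)
    (w : InflVert G) (P : Set (Set (InflVert G)))
    (hP : IsPartitionOf P {v | v ≠ w})
    (hcomp : ∀ B ∈ compPartition (cliqueGraph G) w, ∃ C ∈ P, B ⊆ C) :
    (P.ncard : ℝ) - 1 ≤ ∑ f ∈ Finset.univ.filter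
        (fun f => f ∈ (Infl G).edgeSet ∧ Crosses P f), liftx G x f := by
  classical
  obtain ⟨hPne, hPsub, hPuniq⟩ := hP
  -- every original vertex has a copy different from w
  have hcopy : ∀ u : V, ∃ a : InflVert G, a.val.1 = u ∧ a ≠ w := by
    intro u
    obtain ⟨e, f, he, hf, hue, huf, hef⟩ := hdeg2 u
    by_cases h : (⟨(u, e), he, hue⟩ : InflVert G) = w
    · refine ⟨⟨(u, f), hf, huf⟩, rfl, ?_⟩
      intro h2
      exact hef (congrArg (fun c : InflVert G => c.val.2) (h2.trans h.symm)).symm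
    · exact ⟨⟨(u, e), he, hue⟩, rfl, h⟩
  -- the block of each original vertex
  have hq0 : ∀ u : V, ∃ B, B ∈ P ∧ {b : InflVert G | b.val.1 = u ∧ b ≠ w} ⊆ B := by
    intro u
    obtain ⟨a, ha1, haw⟩ := hcopy u
    obtain ⟨C, hC, hsub⟩ := hcomp _ (compPartition_mem haw)
    refine ⟨C, hC, ?_⟩
    rw [ha1] at hsub
    exact hsub
  choose q hqP hqsub using hq0
  have hmemq : ∀ a : InflVert G, a ≠ w → a ∈ q a.val.1 := by
    intro a haw
    exact hqsub a.val.1 ⟨rfl, haw⟩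
  have huniq : ∀ a : InflVert G, a ≠ w → ∀ B ∈ P, a ∈ B → B = q a.val.1 := by
    intro a haw B hB haB
    obtain ⟨C, -, hCuniq⟩ := hPuniq a haw
    have h1 := hCuniq B ⟨hB, haB⟩
    have h2 := hCuniq (q a.val.1) ⟨hqP a.val.1, hmemq a haw⟩
    rw [h1, h2]
  -- P is the image of q
  have hPeq : P = ↑(Finset.univ.image q) := by
    ext B
    simp only [Finset.coe_image, Finset.coe_univ, Set.image_univ, Set.mem_range]
    constructor
    · intro hB
      obtain ⟨a, haB⟩ := hPne B hB
      have haw : a ≠ w := hPsub B hB haB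
      exact ⟨a.val.1, (huniq a haw B hB haB).symm⟩
    · rintro ⟨u, rfl⟩
      exact hqP u
  have hcard : P.ncard = (Finset.univ.image q).card := by
    rw [hPeq, Set.ncard_coe_finset]
  -- crossing edges of G (other than w's edge) give crossing inter-clique edges
  have hcr : ∀ g ∈ G.edgeSet, g ≠ w.val.2 → qCross q g → Crosses P (ieT G g) := by
    intro g hg hgw hqc
    obtain ⟨A, B, hAB, hgeq, hA1, hB1, hA2, hB2⟩ := ieT_rep G hg
    have houts : q g.out.1 ≠ q g.out.2 := by
      obtain ⟨u, u', hguu', hquu'⟩ := hqc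
      have := (sym2_out_eq g).symm.trans hguu'
      rw [Sym2.eq_iff] at this
      rcases this with ⟨h1, h2⟩ | ⟨h1, h2⟩
      · rw [h1, h2]; exact hquu'
      · rw [h1, h2]; exact hquu'.symm
    have hAw : A ≠ w := fun h => hgw (hA2 ▸ congrArg (fun c : InflVert G => c.val.2) h)
    have hBw : B ≠ w := fun h => hgw (hB2 ▸ congrArg (fun c : InflVert G => c.val.2) h)
    rw [hgeq]
    rw [crosses_mk]
    refine ⟨q g.out.1, hqP _, q g.out.2, hqP _, houts, Or.inl ⟨?_, ?_⟩⟩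
    · have := hmemq A hAw
      rw [hA1] at this
      exact this
    · have := hmemq B hBw
      rw [hB1] at this
      exact this
  set k := (Finset.univ.image q).card with hkdef
  by_cases hk : 2 ≤ k
  · have hlb : (k : ℝ) ≤ _ := crossing_lb hx q hk
    have hw2 : w.val.2 ∈ G.edgeSet := w.2.1
    have hw2le := (hx.1 _ hw2).2
    set A := Finset.univ.filter (fun g => g ∈ G.edgeSet ∧ qCross q g) with hAdef
    have hsub : A.erase w.val.2 ⊆ Finset.univ.filter
        (fun g => g ∈ G.edgeSet ∧ Crosses P (ieT G g)) := by
      intro g hg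
      rw [Finset.mem_erase, hAdef, Finset.mem_filter] at hg
      obtain ⟨hgw, -, hge, hgc⟩ := hg
      rw [Finset.mem_filter]
      exact ⟨Finset.mem_univ _, hge, hcr g hge hgw hgc⟩
    have h1 : ∑ g ∈ A.erase w.val.2, x g ≤ ∑ g ∈ Finset.univ.filter
        (fun g => g ∈ G.edgeSet ∧ Crosses P (ieT G g)), x g := by
      apply Finset.sum_le_sum_of_subset_of_nonneg hsub
      intro g hg _
      rw [Finset.mem_filter] at hg
      exact (hx.1 g hg.2.1).1
    have h2 : (k : ℝ) - 1 ≤ ∑ g ∈ A.erase w.val.2, x g := by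
      by_cases hmem : w.val.2 ∈ A
      · have := Finset.sum_erase_add A x hmem
        linarith
      · rw [Finset.erase_eq_of_notMem hmem]
        linarith
    have hclnn : (0:ℝ) ≤ ∑ f ∈ Finset.univ.filter
        (fun f => f ∈ (Infl G).edgeSet ∧ isCl G f ∧ Crosses P f), liftx G x f := by
      apply Finset.sum_nonneg
      intro f hf
      rw [Finset.mem_filter] at hf
      exact liftx_nonneg G (fun e he => (hx.1 e he).1) hf.2.1
    rw [liftx_sum_split G x (Crosses P), hcard]
    linarith
  · -- at most one block: the bound is trivial
    have : (P.ncard : ℝ) ≤ 1 := by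
      rw [hcard]
      push_neg at hk
      exact_mod_cast Nat.lt_succ_iff.mp hk
    have hnn : (0:ℝ) ≤ ∑ f ∈ Finset.univ.filter
        (fun f => f ∈ (Infl G).edgeSet ∧ Crosses P f), liftx G x f := by
      apply Finset.sum_nonneg
      intro f hf
      rw [Finset.mem_filter] at hf
      exact liftx_nonneg G (fun e he => (hx.1 e he).1) hf.2.1
    linarith

end Aux11
section Aux12
variable {V : Type*} (G : SimpleGraph V) [Fintype V] [Nonempty (InflVert G)]

lemma obj_liftx (c : Sym2 V → ℝ) (c' : Sym2 (InflVert G) → ℝ)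
    (hc'cl : ∀ a b : InflVert G, a ≠ b → a.val.1 = b.val.1 → c' s(a, b) = 0)
    (hc'in : ∀ a b : InflVert G, a ≠ b → a.val.2 = b.val.2 → c' s(a, b) = c a.val.2)
    (x : Sym2 V → ℝ) : obj (Infl G) c' (liftx G x) = obj G c x := by
  rw [obj_infl G c c' hc'cl hc'in, obj]
  apply Finset.sum_congr rfl
  intro e he
  rw [Finset.mem_filter] at he
  rw [liftx_ieT G x he.2]

lemma obj_pullx (c : Sym2 V → ℝ) (c' : Sym2 (InflVert G) → ℝ)
    (hc'cl : ∀ a b : InflVert G, a ≠ b → a.val.1 = b.val.1 → c' s(a, b) = 0)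
    (hc'in : ∀ a b : InflVert G, a ≠ b → a.val.2 = b.val.2 → c' s(a, b) = c a.val.2)
    (x' : Sym2 (InflVert G) → ℝ) : obj G c (pullx G x') = obj (Infl G) c' x' := by
  rw [obj_infl G c c' hc'cl hc'in, obj]
  apply Finset.sum_congr rfl
  intro e he
  rw [Finset.mem_filter] at he
  rw [pullx_eq G x' he.2]

lemma liftx_mem_PNC {x : Sym2 V → ℝ} (hx : x ∈ PEC G) (hV : 3 ≤ Fintype.card V)
    (h2ec : TwoEdgeConnected G) : liftx G x ∈ PNC G := by
  refine ⟨?_, ?_, ?_⟩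
  · intro f hf
    exact ⟨liftx_nonneg G (fun e he => (hx.1 e he).1) hf,
      liftx_le_one G (fun e he => (hx.1 e he).2) hf⟩
  · exact liftx_cut G hx hV (deg2 h2ec hV)
  · intro w P hP hcomp
    exact liftx_partition G hx (deg2 h2ec hV) w P hP hcomp

lemma liftx_integral {x : Sym2 V → ℝ} (hint : ∀ e ∈ G.edgeSet, x e = 0 ∨ x e = 1) :
    ∀ f ∈ (Infl G).edgeSet, liftx G x f = 0 ∨ liftx G x f = 1 := by
  intro f hf
  obtain ⟨a, b, rfl, hne, hcase⟩ := infl_edge_classify G hf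
  rcases hcase with ⟨h1, -⟩ | ⟨h2, -⟩
  · rw [liftx_cl G x hne h1]; exact Or.inr rfl
  · rw [liftx_inter G x hne h2]; exact hint _ a.2.1

lemma pullx_integral {x' : Sym2 (InflVert G) → ℝ}
    (hint : ∀ f ∈ (Infl G).edgeSet, x' f = 0 ∨ x' f = 1) :
    ∀ e ∈ G.edgeSet, pullx G x' e = 0 ∨ pullx G x' e = 1 := by
  intro e he
  rw [pullx_eq G x' he]
  exact hint _ (ieT_mem G he)

end Aux12

/-- Let `G` be 2-edge-connected with positive edge costs `c`, and let
`(G', c')` be its inflated instance. Then the optimal value of the cut LP for `(G, c)`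
equals the optimal value of the partition LP for `(G', c')`, the minimum cost of an
integral point of `P_EC(G)` equals the minimum cost of an integral point of `P_NC(G')`,
and consequently the two integrality ratios coincide. -/
theorem inflation_preserves_optima_and_integrality_ratio
    (G : SimpleGraph V) (hV : 3 ≤ Fintype.card V) (h2ec : TwoEdgeConnected G)
    (c : Sym2 V → ℝ) (hc : ∀ e ∈ G.edgeSet, 0 < c e)
    (c' : Sym2 (InflVert G) → ℝ)
    (hc'cl : ∀ a b : InflVert G, a ≠ b → a.val.1 = b.val.1 → c' s(a, b) = 0)
    (hc'in : ∀ a b : InflVert G, a ≠ b → a.val.2 = b.val.2 → c' s(a, b) = c a.val.2) :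
    sInf {t : ℝ | ∃ x ∈ PEC G, t = obj G c x}
        = sInf {t : ℝ | ∃ x' ∈ PNC G, t = obj (Infl G) c' x'} ∧
    sInf {t : ℝ | ∃ x ∈ PEC G, (∀ e ∈ G.edgeSet, x e = 0 ∨ x e = 1) ∧ t = obj G c x}
        = sInf {t : ℝ | ∃ x' ∈ PNC G,
            (∀ f ∈ (Infl G).edgeSet, x' f = 0 ∨ x' f = 1) ∧ t = obj (Infl G) c' x'} ∧
    sInf {t : ℝ | ∃ x ∈ PEC G, (∀ e ∈ G.edgeSet, x e = 0 ∨ x e = 1) ∧ t = obj G c x} /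
        sInf {t : ℝ | ∃ x ∈ PEC G, t = obj G c x}
      = sInf {t : ℝ | ∃ x' ∈ PNC G,
            (∀ f ∈ (Infl G).edgeSet, x' f = 0 ∨ x' f = 1) ∧ t = obj (Infl G) c' x'} /
        sInf {t : ℝ | ∃ x' ∈ PNC G, t = obj (Infl G) c' x'} := by
  have hNE : Nonempty (InflVert G) := infl_nonempty h2ec.1 (by omega)
  have hdeg1 : ∀ v : V, ∃ e ∈ G.edgeSet, v ∈ e := deg1 h2ec.1 (by omega)
  have hset1 : {t : ℝ | ∃ x ∈ PEC G, t = obj G c x}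
      = {t : ℝ | ∃ x' ∈ PNC G, t = obj (Infl G) c' x'} := by
    ext t
    constructor
    · rintro ⟨x, hx, rfl⟩
      exact ⟨liftx G x, liftx_mem_PNC G hx hV h2ec,
        (obj_liftx G c c' hc'cl hc'in x).symm⟩
    · rintro ⟨x', hx', rfl⟩
      exact ⟨pullx G x', pullx_mem_PEC G hdeg1 hx',
        (obj_pullx G c c' hc'cl hc'in x').symm⟩
  have hset2 : {t : ℝ | ∃ x ∈ PEC G, (∀ e ∈ G.edgeSet, x e = 0 ∨ x e = 1) ∧ t = obj G c x}
      = {t : ℝ | ∃ x' ∈ PNC G,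
          (∀ f ∈ (Infl G).edgeSet, x' f = 0 ∨ x' f = 1) ∧ t = obj (Infl G) c' x'} := by
    ext t
    constructor
    · rintro ⟨x, hx, hxi, rfl⟩
      exact ⟨liftx G x, liftx_mem_PNC G hx hV h2ec, liftx_integral G hxi,
        (obj_liftx G c c' hc'cl hc'in x).symm⟩
    · rintro ⟨x', hx', hxi', rfl⟩
      exact ⟨pullx G x', pullx_mem_PEC G hdeg1 hx', pullx_integral G hxi',
        (obj_pullx G c c' hc'cl hc'in x').symm⟩
  rw [hset1, hset2]
  exact ⟨rfl, rfl, rfl⟩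

end TwoNCTAP
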